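/- arXiv:1304.0608 — 4 statements merged into one kernel-verified Lean document; each statement's English description precedes it below -/
import Mathlib

section
/- The function g(b) = −(log₂ e)/(M−1) · ∑_{i=1}^{2^b} 1/i on nonnegative integers is discretely concave: for all b ≥ 0, g(b+2) − 2·g(b+1) + g(b) < 0. -/
/-- Expected log-quantization error of `b`-bit RVQ in dimension `M`:
`g(b) = −(log₂ e)/(M−1) · ∑_{i=1}^{2^b} 1/i`. -/
noncomputable def rvqLogErr (M : ℕ) (b : ℕ) : ℝ :=
  -(Real.logb 2 (Real.exp 1)) / ((M : ℝ) - 1) *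
    ∑ i ∈ Finset.Icc 1 (2 ^ b : ℕ), (1 : ℝ) / (i : ℝ)

lemma pair_sum (f : ℕ → ℝ) (a m : ℕ) :
    ∑ i ∈ Finset.Ioc (2*a) (2*a+2*m), f i
      = ∑ k ∈ Finset.Ioc a (a+m), (f (2*k-1) + f (2*k)) := by
  induction m with
  | zero => simp
  | succ m ih =>
    have h1 : 2*a + 2*(m+1) = (2*a+2*m+1) + 1 := by ring
    have h2 : a + (m+1) = (a+m) + 1 := by ring
    rw [h1, Finset.sum_Ioc_succ_top (by omega),
        show 2*a+2*m+1 = (2*a+2*m)+1 from rfl,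
        Finset.sum_Ioc_succ_top (by omega), ih,
        h2, Finset.sum_Ioc_succ_top (by omega)]
    have e1 : 2*(a+m+1) - 1 = 2*a+2*m+1 := by omega
    have e2 : 2*(a+m+1) = 2*a+2*m+1+1 := by omega
    rw [e1, e2]; ring

lemma harm_diff_lt (n : ℕ) (hn : 1 ≤ n) :
    ∑ i ∈ Finset.Ioc n (2*n), (1 : ℝ) / (i : ℝ)
      < ∑ i ∈ Finset.Ioc (2*n) (4*n), (1 : ℝ) / (i : ℝ) := by
  have h4 : (4:ℕ)*n = 2*n + 2*n := by ring
  have h2 : (2:ℕ)*n = n + n := by ring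
  rw [h4, pair_sum (fun i => (1:ℝ)/(i:ℝ)) n n, ← h2]
  apply Finset.sum_lt_sum_of_nonempty
  · exact Finset.nonempty_Ioc.2 (by omega)
  · intro k hk
    simp only [Finset.mem_Ioc] at hk
    have hk1 : 1 ≤ k := le_trans hn (le_of_lt hk.1)
    have hpos : (0:ℝ) < (k:ℝ) := by positivity
    have hc : ((2*k-1 : ℕ) : ℝ) = 2*(k:ℝ) - 1 := by
      have : (2*k-1 : ℕ) + 1 = 2*k := by omega
      have := congrArg (fun x : ℕ => (x : ℝ)) this
      push_cast at this ⊢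
      linarith
    have hc2 : ((2*k : ℕ) : ℝ) = 2*(k:ℝ) := by push_cast; ring
    rw [hc, hc2]
    have h1 : (0:ℝ) < 2*(k:ℝ) - 1 := by
      have : (1:ℝ) ≤ (k:ℝ) := by exact_mod_cast hk1
      linarith
    have h2 : (0:ℝ) < 2*(k:ℝ) := by linarith
    have hlt : (1:ℝ)/(2*(k:ℝ)) < 1/(2*(k:ℝ)-1) := by
      apply one_div_lt_one_div_of_lt h1; linarith
    have heq : (1:ℝ)/(k:ℝ) = 1/(2*(k:ℝ)) + 1/(2*(k:ℝ)) := by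
      field_simp; ring
    linarith

/-- Discrete concavity of the expected log quantization error. -/
theorem stmt4 (M : ℕ) (hM : 2 ≤ M) (b : ℕ) :
    rvqLogErr M (b + 2) - 2 * rvqLogErr M (b + 1) + rvqLogErr M b < 0 := by
  set n := 2 ^ b with hn
  have hn1 : 1 ≤ n := Nat.one_le_two_pow
  have hb1 : 2 ^ (b+1) = 2 * n := by rw [hn]; ring
  have hb2 : 2 ^ (b+2) = 4 * n := by rw [hn]; ring
  -- sums as Ioc 0
  have hIcc : ∀ m : ℕ, Finset.Icc 1 m = Finset.Ioc 0 m := by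
    intro m; ext x; simp [Nat.lt_iff_add_one_le]
  set f : ℕ → ℝ := fun i => (1:ℝ)/(i:ℝ) with hf
  have split1 : ∑ i ∈ Finset.Ioc 0 (2*n), f i
      = ∑ i ∈ Finset.Ioc 0 n, f i + ∑ i ∈ Finset.Ioc n (2*n), f i :=
    (Finset.sum_Ioc_consecutive f (Nat.zero_le n) (by omega)).symm
  have split2 : ∑ i ∈ Finset.Ioc 0 (4*n), f i
      = ∑ i ∈ Finset.Ioc 0 (2*n), f i + ∑ i ∈ Finset.Ioc (2*n) (4*n), f i :=
    (Finset.sum_Ioc_consecutive f (Nat.zero_le (2*n)) (by omega)).symm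
  have hkey := harm_diff_lt n hn1
  have hSpos : ∑ i ∈ Finset.Ioc 0 (4*n), f i - 2 * ∑ i ∈ Finset.Ioc 0 (2*n), f i
      + ∑ i ∈ Finset.Ioc 0 n, f i > 0 := by
    rw [split2, split1]; linarith
  have hc : 0 < Real.logb 2 (Real.exp 1) / ((M : ℝ) - 1) := by
    apply div_pos
    · apply Real.logb_pos (by norm_num)
      have := Real.exp_one_gt_d9
      linarith
    · have : (2:ℝ) ≤ (M:ℝ) := by exact_mod_cast hM
      linarith
  unfold rvqLogErr
  rw [hb1, hb2, hIcc, hIcc, hIcc]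
  have e : -(Real.logb 2 (Real.exp 1)) / ((M : ℝ) - 1)
      = -(Real.logb 2 (Real.exp 1) / ((M : ℝ) - 1)) := by ring
  rw [e]
  set c := Real.logb 2 (Real.exp 1) / ((M : ℝ) - 1) with hcdef
  have : -c * ∑ i ∈ Finset.Ioc 0 (4*n), f i
      - 2 * (-c * ∑ i ∈ Finset.Ioc 0 (2*n), f i)
      + -c * ∑ i ∈ Finset.Ioc 0 n, f i
      = -c * (∑ i ∈ Finset.Ioc 0 (4*n), f i - 2 * ∑ i ∈ Finset.Ioc 0 (2*n), f i
        + ∑ i ∈ Finset.Ioc 0 n, f i) := by ring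
  rw [this]
  have := mul_pos hc hSpos.lt
  nlinarith
end

section
/- For Z with complementary CDF P(Z > z) = (1 − z^{M−1})^N on [0,1], one has E[ln Z] = −(1/(M−1)) · ∑_{i=1}^{N} 1/i. -/
open MeasureTheory Set Filter Real

lemma intH_aux (c : ℝ) (hc : 0 < c) (N : ℕ) :
    IntegrableOn (fun t => (1 - Real.exp (-(c*t)))^N * Real.exp (-(c*t))) (Set.Ioi 0) ∧
    ∫ t in Set.Ioi 0, (1 - Real.exp (-(c*t)))^N * Real.exp (-(c*t)) = 1 / (c * (N+1)) := by
  have hint : IntegrableOn (fun t => (1 - Real.exp (-(c*t)))^N * Real.exp (-(c*t))) (Set.Ioi 0) := by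
    have hbase : IntegrableOn (fun t => Real.exp (-c*t)) (Set.Ioi 0) :=
      exp_neg_integrableOn_Ioi 0 hc
    refine Integrable.mono hbase ?_ ?_
    · exact (Continuous.aestronglyMeasurable (by continuity)).restrict
    · filter_upwards [ae_restrict_mem measurableSet_Ioi] with t ht
      have ht0 : (0:ℝ) < t := ht
      have h1 : Real.exp (-(c*t)) ≤ 1 := Real.exp_le_one_iff.mpr (by nlinarith)
      have h0 : 0 < Real.exp (-(c*t)) := Real.exp_pos _
      have hp : (1 - Real.exp (-(c*t)))^N ≤ 1 :=
        pow_le_one₀ (by linarith) (by linarith)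
      have hpn : (0:ℝ) ≤ (1 - Real.exp (-(c*t)))^N := pow_nonneg (by linarith) _
      rw [Real.norm_eq_abs, Real.norm_eq_abs, abs_of_nonneg (by positivity : (0:ℝ) ≤ Real.exp (-c*t)),
        abs_of_nonneg (by positivity : (0:ℝ) ≤ (1 - Real.exp (-(c*t)))^N * Real.exp (-(c*t)))]
      calc (1 - Real.exp (-(c*t)))^N * Real.exp (-(c*t)) ≤ 1 * Real.exp (-(c*t)) := by
            apply mul_le_mul_of_nonneg_right hp h0.le
        _ = Real.exp (-c*t) := by ring_nf
  refine ⟨hint, ?_⟩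
  have hderiv : ∀ t ∈ Set.Ici (0:ℝ), HasDerivAt (fun t => (1 - Real.exp (-(c*t)))^(N+1) / (c*(N+1)))
      ((1 - Real.exp (-(c*t)))^N * Real.exp (-(c*t))) t := by
    intro t _
    have h1 : HasDerivAt (fun t : ℝ => -(c*t)) (-c) t := by
      exact ((hasDerivAt_id t).const_mul c).neg.congr_deriv (by ring)
    have h2 : HasDerivAt (fun t : ℝ => 1 - Real.exp (-(c*t))) (c * Real.exp (-(c*t))) t := by
      have := (Real.hasDerivAt_exp (-(c*t))).comp t h1
      have h3 := this.const_sub 1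
      exact h3.congr_deriv (by ring)
    have h4 := (h2.pow (N+1)).div_const (c*(N+1))
    refine h4.congr_deriv ?_
    simp only [Nat.add_sub_cancel, Nat.cast_add, Nat.cast_one]
    field_simp
  have htend : Tendsto (fun t => (1 - Real.exp (-(c*t)))^(N+1) / (c*(N+1))) atTop
      (nhds (1 / (c*(N+1)))) := by
    have h0 : Tendsto (fun t : ℝ => Real.exp (-(c*t))) atTop (nhds 0) := by
      have : Tendsto (fun t : ℝ => -(c*t)) atTop atBot := by
        apply tendsto_neg_atBot_iff.mpr
        simpa using tendsto_id.const_mul_atTop hc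
      exact Real.tendsto_exp_atBot.comp this
    have : Tendsto (fun t : ℝ => (1 - Real.exp (-(c*t)))^(N+1)) atTop (nhds 1) := by
      have h1 : Tendsto (fun t : ℝ => 1 - Real.exp (-(c*t))) atTop (nhds (1 - 0)) :=
        (tendsto_const_nhds : Tendsto (fun _ : ℝ => (1:ℝ)) atTop (nhds 1)).sub h0
      have := h1.pow (N+1)
      simpa using this
    simpa using this.div_const (c*(N+1))
  have := integral_Ioi_of_hasDerivAt_of_tendsto' hderiv hint htend
  rw [this]
  simp [Real.exp_zero]

lemma intH (c : ℝ) (hc : 0 < c) (N : ℕ) :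
    IntegrableOn (fun t => 1 - (1 - Real.exp (-(c*t)))^N) (Set.Ioi 0) ∧
    ∫ t in Set.Ioi 0, (1 - (1 - Real.exp (-(c*t)))^N) =
      (∑ i ∈ Finset.Icc 1 N, (1:ℝ)/i) / c := by
  induction N with
  | zero => simp
  | succ n ih =>
    obtain ⟨ih1, ih2⟩ := ih
    obtain ⟨h1, h2⟩ := intH_aux c hc n
    have key : ∀ t : ℝ, 1 - (1 - Real.exp (-(c*t)))^(n+1) =
        (1 - (1 - Real.exp (-(c*t)))^n) + (1 - Real.exp (-(c*t)))^n * Real.exp (-(c*t)) := by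
      intro t; ring
    constructor
    · simp_rw [key]; exact ih1.add h1
    · simp_rw [key]
      rw [integral_add ih1 h1, ih2, h2, Finset.sum_Icc_succ_top (by omega : 1 ≤ n+1)]
      push_cast
      field_simp

lemma cdf_lt {Ω : Type*} [MeasurableSpace Ω] (μ : Measure Ω) [IsProbabilityMeasure μ]
    (M N : ℕ) (Z : Ω → ℝ) (hmeas : Measurable Z)
    (hccdf : ∀ z ∈ Set.Icc (0 : ℝ) 1,
      μ {ω | z < Z ω} = ENNReal.ofReal ((1 - z ^ (M - 1)) ^ N))
    (z : ℝ) (hz0 : 0 < z) (hz1 : z ≤ 1) :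
    μ {ω | Z ω < z} = ENNReal.ofReal (1 - (1 - z ^ (M - 1)) ^ N) := by
  set s : ℕ → Set Ω := fun n => {ω | Z ω ≤ z - z/(n+1)} with hs_def
  have hmono : Monotone s := by
    intro a b hab ω h
    simp only [hs_def, Set.mem_setOf_eq] at *
    have hab' : (a:ℝ) + 1 ≤ (b:ℝ) + 1 := by
      have := (Nat.cast_le (α := ℝ)).mpr hab; linarith
    have : z/(b+1) ≤ z/(a+1) :=
      div_le_div_of_nonneg_left hz0.le (by positivity) hab'
    linarith
  have hU : (⋃ n, s n) = {ω | Z ω < z} := by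
    ext ω
    simp only [Set.mem_iUnion, hs_def, Set.mem_setOf_eq]
    constructor
    · rintro ⟨n, hn⟩
      have : 0 < z/(n+1) := by positivity
      linarith
    · intro h
      have htend : Filter.Tendsto (fun n : ℕ => z - z/(n+1)) Filter.atTop (nhds (z - 0)) := by
        apply Filter.Tendsto.sub tendsto_const_nhds
        have h0 : Filter.Tendsto (fun n : ℕ => (1:ℝ)/(n+1)) Filter.atTop (nhds 0) :=
          tendsto_one_div_add_atTop_nhds_zero_nat
        have := h0.const_mul z
        simpa [div_eq_mul_inv, mul_comm] using this
      rw [sub_zero] at htend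
      obtain ⟨n, hn⟩ := (htend.eventually (eventually_gt_nhds h)).exists
      exact ⟨n, hn.le⟩
  have hmeasn : ∀ n, μ (s n) =
      ENNReal.ofReal (1 - (1 - (z - z/(n+1)) ^ (M-1)) ^ N) := by
    intro n
    set w : ℝ := z - z/(n+1) with hw
    have hw0 : 0 ≤ w := by
      have h1 : z/(n+1) ≤ z := by
        rw [div_le_iff₀ (by positivity)]
        nlinarith [Nat.cast_nonneg (α := ℝ) n]
      simp only [hw]; linarith
    have hw1 : w ≤ 1 := by
      have : 0 < z/(n+1) := by positivity
      simp only [hw]; linarith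
    have hcompl : s n = {ω | w < Z ω}ᶜ := by
      ext ω; simp [hs_def, hw, not_lt]
    have hwp : w ^ (M-1) ≤ 1 := pow_le_one₀ hw0 hw1
    have hnn : (0:ℝ) ≤ (1 - w ^ (M-1)) ^ N := pow_nonneg (by linarith) _
    have hle : (1 - w ^ (M-1)) ^ N ≤ 1 :=
      pow_le_one₀ (by linarith) (by nlinarith [pow_nonneg hw0 (M-1)])
    rw [hcompl, measure_compl (measurableSet_lt measurable_const hmeas) (measure_ne_top μ _),
      hccdf w ⟨hw0, hw1⟩, measure_univ]
    rw [← ENNReal.ofReal_one, ← ENNReal.ofReal_sub _ hnn]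
  have ht1 : Filter.Tendsto (fun n => μ (s n)) Filter.atTop (nhds (μ (⋃ n, s n))) :=
    tendsto_measure_iUnion_atTop hmono
  have ht2 : Filter.Tendsto (fun n => μ (s n)) Filter.atTop
      (nhds (ENNReal.ofReal (1 - (1 - z ^ (M-1)) ^ N))) := by
    simp_rw [hmeasn]
    have hwt : Filter.Tendsto (fun n : ℕ => z - z/(n+1)) Filter.atTop (nhds z) := by
      have h0 : Filter.Tendsto (fun n : ℕ => (1:ℝ)/(n+1)) Filter.atTop (nhds 0) :=
        tendsto_one_div_add_atTop_nhds_zero_nat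
      have := (tendsto_const_nhds (x := z) (f := Filter.atTop)).sub (h0.const_mul z)
      simpa [div_eq_mul_inv, mul_comm] using this
    have hcont : Continuous (fun w : ℝ => ENNReal.ofReal (1 - (1 - w ^ (M-1)) ^ N)) := by
      apply ENNReal.continuous_ofReal.comp; continuity
    exact (hcont.tendsto z).comp hwt
  rw [← hU]
  exact tendsto_nhds_unique ht1 ht2

/-- If `Z` has complementary CDF `(1 − z^{M−1})^N` on `[0,1]` then
`E[ln Z] = −(1/(M−1)) · ∑_{i=1}^N 1/i`. -/
theorem stmt10 {Ω : Type*} [MeasurableSpace Ω] (μ : Measure Ω) [IsProbabilityMeasure μ]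
    (M N : ℕ) (hM : 2 ≤ M) (hN : 1 ≤ N)
    (Z : Ω → ℝ) (hmeas : Measurable Z) (hval : ∀ ω, Z ω ∈ Set.Icc (0 : ℝ) 1)
    (hccdf : ∀ z ∈ Set.Icc (0 : ℝ) 1,
      μ {ω | z < Z ω} = ENNReal.ofReal ((1 - z ^ (M - 1)) ^ N)) :
    ∫ ω, Real.log (Z ω) ∂μ = -(1 / ((M : ℝ) - 1)) * ∑ i ∈ Finset.Icc 1 N, (1 : ℝ) / (i : ℝ) := by
  set c : ℝ := (M:ℝ) - 1 with hc_def
  have hM' : (2:ℝ) ≤ (M:ℝ) := by exact_mod_cast hM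
  have hc : 0 < c := by simp only [hc_def]; linarith
  have hcast : ((M - 1 : ℕ) : ℝ) = c := by
    simp only [hc_def]; push_cast [Nat.cast_sub (by omega : 1 ≤ M)]; ring
  set W : Ω → ℝ := fun ω => -Real.log (Z ω) with hW_def
  have hWnn : ∀ ω, 0 ≤ W ω := fun ω => by
    simp only [hW_def, neg_nonneg]
    exact Real.log_nonpos (hval ω).1 (hval ω).2
  have hWm : Measurable W := (Real.measurable_log.comp hmeas).neg
  -- Z is a.e. positive
  have hZ0 : μ {ω | Z ω = 0} = 0 := by
    have h0 := hccdf 0 ⟨le_refl 0, zero_le_one⟩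
    have hMm : M - 1 ≠ 0 := by omega
    rw [zero_pow hMm] at h0
    simp only [sub_zero, one_pow, ENNReal.ofReal_one] at h0
    have hcompl : μ {ω | 0 < Z ω}ᶜ = 0 := by
      rw [measure_compl (measurableSet_lt measurable_const hmeas) (measure_ne_top μ _), h0,
        measure_univ, tsub_self]
    refine measure_mono_null ?_ hcompl
    intro ω hω
    simp only [Set.mem_compl_iff, Set.mem_setOf_eq] at *
    linarith [hω.le]
  -- layer cake
  have hlay := lintegral_eq_lintegral_meas_lt μ (Filter.Eventually.of_forall hWnn)
    hWm.aemeasurable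
  have hsec : ∀ t ∈ Set.Ioi (0:ℝ), μ {a | t < W a} =
      ENNReal.ofReal (1 - (1 - Real.exp (-(c*t)))^N) := by
    intro t ht
    have ht0 : 0 < t := ht
    have hae : {a | t < W a} =ᵐ[μ] {a | Z a < Real.exp (-t)} := by
      have hsub : symmDiff {a | t < W a} {a | Z a < Real.exp (-t)} ⊆ {ω | Z ω = 0} := by
        intro ω hω
        rw [Set.mem_symmDiff] at hω
        by_contra h0
        have hZpos : 0 < Z ω := lt_of_le_of_ne (hval ω).1 (Ne.symm h0)
        have hiff : t < W ω ↔ Z ω < Real.exp (-t) := by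
          simp only [hW_def, lt_neg]
          exact Real.log_lt_iff_lt_exp hZpos
        rcases hω with ⟨h1, h2⟩ | ⟨h1, h2⟩
        · exact h2 (hiff.mp h1)
        · exact h2 (hiff.mpr h1)
      have : μ (symmDiff {a | t < W a} {a | Z a < Real.exp (-t)}) = 0 :=
        measure_mono_null hsub hZ0
      exact measure_symmDiff_eq_zero_iff.mp this
    rw [measure_congr hae]
    have he1 : Real.exp (-t) ≤ 1 := Real.exp_le_one_iff.mpr (by linarith)
    rw [cdf_lt μ M N Z hmeas hccdf _ (Real.exp_pos _) he1]
    congr 3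
    rw [← Real.exp_nat_mul, hcast]
    ring_nf
  obtain ⟨hint, hvalInt⟩ := intH c hc N
  set S : ℝ := ∑ i ∈ Finset.Icc 1 N, (1:ℝ)/i with hS_def
  have hSnn : 0 ≤ S := Finset.sum_nonneg fun i _ => by positivity
  have hlint : ∫⁻ ω, ENNReal.ofReal (W ω) ∂μ = ENNReal.ofReal (S/c) := by
    rw [hlay, setLIntegral_congr_fun measurableSet_Ioi hsec,
      ← ofReal_integral_eq_lintegral_ofReal hint ?_, hvalInt]
    filter_upwards [ae_restrict_mem measurableSet_Ioi] with t ht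
    have ht0 : (0:ℝ) < t := ht
    have he1 : Real.exp (-(c*t)) ≤ 1 := Real.exp_le_one_iff.mpr (by nlinarith)
    have he0 : 0 < Real.exp (-(c*t)) := Real.exp_pos _
    have : (1 - Real.exp (-(c*t)))^N ≤ 1 := pow_le_one₀ (by linarith) (by linarith)
    simp only [Pi.zero_apply]
    linarith
  have hWint : Integrable W μ := by
    refine ⟨hWm.aestronglyMeasurable, ?_⟩
    rw [hasFiniteIntegral_iff_ofReal (Filter.Eventually.of_forall hWnn), hlint]
    exact ENNReal.ofReal_lt_top
  have hWval : ∫ ω, W ω ∂μ = S/c := by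
    rw [integral_eq_lintegral_of_nonneg_ae (Filter.Eventually.of_forall hWnn)
      hWm.aestronglyMeasurable, hlint, ENNReal.toReal_ofReal (by positivity)]
  have hlog : ∫ ω, Real.log (Z ω) ∂μ = -∫ ω, W ω ∂μ := by
    rw [← integral_neg]
    congr 1
    ext ω
    simp [hW_def]
  rw [hlog, hWval]
  field_simp
end

section
/- The expected quantization error b ↦ 2^b · B(2^b, M/(M−1)) is strictly decreasing in b for every integer M ≥ 2. -/
/-- The Beta function `B(x,y) = Γ(x)Γ(y)/Γ(x+y)`. -/
noncomputable def Beta (x y : ℝ) : ℝ := Real.Gamma x * Real.Gamma y / Real.Gamma (x + y)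

lemma gamma_add_nat (y : ℝ) (hy : 0 < y) (n : ℕ) :
    Real.Gamma (y + n) = (∏ k ∈ Finset.range n, (y + k)) * Real.Gamma y := by
  induction n with
  | zero => simp
  | succ n ih =>
    have h1 : (y + ((n : ℕ) + 1 : ℕ) : ℝ) = (y + n) + 1 := by push_cast; ring
    have hne : (y + (n : ℝ)) ≠ 0 := by positivity
    rw [h1, Real.Gamma_add_one hne, ih, Finset.prod_range_succ]
    ring

lemma fact_prod (n m : ℕ) :
    (n + m).factorial = n.factorial * ∏ i ∈ Finset.range m, (n + i + 1) := by
  induction m with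
  | zero => simp
  | succ m ih =>
    rw [Finset.prod_range_succ, ← mul_assoc, ← ih, ← Nat.add_assoc, Nat.factorial_succ]
    ring

lemma mul_beta_eq (y : ℝ) (hy : 0 < y) (n : ℕ) (hn : 0 < n) :
    (n : ℝ) * Beta n y = (n.factorial : ℝ) / ∏ k ∈ Finset.range n, (y + k) := by
  have hP : 0 < ∏ k ∈ Finset.range n, (y + k) :=
    Finset.prod_pos (fun k _ => by positivity)
  have hG : Real.Gamma ((n : ℝ) + y) = (∏ k ∈ Finset.range n, (y + k)) * Real.Gamma y := by
    rw [add_comm]; exact gamma_add_nat y hy n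
  have hGy : Real.Gamma y ≠ 0 := (Real.Gamma_pos_of_pos hy).ne'
  have hΓn : (n : ℝ) * Real.Gamma n = n.factorial := by
    have h0 : (n : ℝ) ≠ 0 := Nat.cast_ne_zero.mpr hn.ne'
    rw [← Real.Gamma_add_one h0, Real.Gamma_nat_eq_factorial]
  unfold Beta
  rw [hG]
  field_simp
  linear_combination hΓn

/-- The expected RVQ quantization error `b ↦ 2^b · B(2^b, M/(M−1))` is strictly
decreasing in the feedback size `b`. -/
theorem stmt13 (M : ℕ) (hM : 2 ≤ M) :
    StrictAnti (fun b : ℕ => (2 : ℝ) ^ b * Beta (2 ^ b) ((M : ℝ) / ((M : ℝ) - 1))) := by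
  set y : ℝ := (M : ℝ) / ((M : ℝ) - 1) with hy_def
  have hM1 : (1 : ℝ) < M := by exact_mod_cast Nat.lt_of_lt_of_le one_lt_two hM
  have hy1 : 1 < y := by
    rw [hy_def, lt_div_iff₀ (by linarith)]
    linarith
  have hy0 : 0 < y := lt_trans one_pos hy1
  have key : ∀ b : ℕ, (2 : ℝ) ^ b * Beta (2 ^ b) y
      = ((2 ^ b).factorial : ℝ) / ∏ k ∈ Finset.range (2 ^ b), (y + k) := by
    intro b
    have := mul_beta_eq y hy0 (2 ^ b) (Nat.pow_pos (by norm_num))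
    rw [← this]
    push_cast
    ring_nf
  apply strictAnti_nat_of_succ_lt
  intro b
  rw [key b, key (b + 1)]
  set n : ℕ := 2 ^ b with hn_def
  have hn : 0 < n := Nat.pow_pos (by norm_num)
  have h2n : 2 ^ (b + 1) = n + n := by rw [hn_def]; ring
  rw [h2n]
  have hPn : 0 < ∏ k ∈ Finset.range n, (y + k) :=
    Finset.prod_pos (fun k _ => by positivity)
  have hP2n : 0 < ∏ k ∈ Finset.range (n + n), (y + k) :=
    Finset.prod_pos (fun k _ => by positivity)
  rw [div_lt_div_iff₀ hP2n hPn]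
  have hsplit : ∏ k ∈ Finset.range (n + n), (y + k)
      = (∏ k ∈ Finset.range n, (y + k)) * ∏ i ∈ Finset.range n, (y + (n + i : ℕ)) :=
    Finset.prod_range_add _ n n
  have hfact : ((n + n).factorial : ℝ)
      = (n.factorial : ℝ) * ∏ i ∈ Finset.range n, ((n : ℝ) + i + 1) := by
    rw [fact_prod n n]; push_cast; ring
  rw [hsplit, hfact]
  have hQ : ∏ i ∈ Finset.range n, ((n : ℝ) + i + 1) < ∏ i ∈ Finset.range n, (y + (n + i : ℕ)) := by
    apply Finset.prod_lt_prod_of_nonempty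
    · intro i _; positivity
    · intro i _; push_cast; linarith
    · exact Finset.nonempty_range_iff.mpr hn.ne'
  calc (n.factorial : ℝ) * (∏ i ∈ Finset.range n, ((n : ℝ) + i + 1))
        * ∏ k ∈ Finset.range n, (y + k)
      < (n.factorial : ℝ) * (∏ i ∈ Finset.range n, (y + (n + i : ℕ)))
        * ∏ k ∈ Finset.range n, (y + k) := by
        apply mul_lt_mul_of_pos_right _ hPn
        apply mul_lt_mul_of_pos_left hQ
        exact_mod_cast Nat.factorial_pos n
    _ = (n.factorial : ℝ) * ((∏ k ∈ Finset.range n, (y + k))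
        * ∏ i ∈ Finset.range n, (y + (n + i : ℕ))) := by ring
end

section
/- Among all vectors b = (b₁,…,b_K) of nonnegative integers with ∑ b_k = K·b̄, the sum ∑_{k=1}^K H(2^{b_k}) of harmonic numbers is maximized by the allocation (K·b̄, 0, …, 0) and minimized by the equal allocation (b̄, …, b̄). -/
/-- The harmonicSum number `H(n) = ∑_{i=1}^n 1/i`. -/
noncomputable def harmonicSum (n : ℕ) : ℝ := ∑ i ∈ Finset.Icc 1 n, (1 : ℝ) / (i : ℝ)

noncomputable def Dgap (b : ℕ) : ℝ :=
  ∑ j ∈ Finset.range (2 ^ b), (1 : ℝ) / ((2 : ℝ) ^ b + (j : ℝ) + 1)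

lemma harm_add (n m : ℕ) :
    harmonicSum (n + m) = harmonicSum n + ∑ j ∈ Finset.range m, (1 : ℝ) / ((n : ℝ) + j + 1) := by
  induction m with
  | zero => simp
  | succ m ih =>
    have h : (1 : ℕ) ≤ n + m + 1 := by omega
    show harmonicSum (n + m + 1) = _
    unfold harmonicSum
    rw [Finset.sum_Icc_succ_top h]
    have ih' := ih
    unfold harmonicSum at ih'
    rw [ih', Finset.sum_range_succ]
    push_cast
    ring

lemma harm_step (b : ℕ) : harmonicSum (2 ^ (b + 1)) = harmonicSum (2 ^ b) + Dgap b := by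
  have h : 2 ^ (b + 1) = 2 ^ b + 2 ^ b := by ring
  rw [h, harm_add]
  unfold Dgap
  congr 1
  apply Finset.sum_congr rfl
  intro j _
  push_cast
  ring_nf

lemma sum_range_two_mul (h : ℕ → ℝ) (n : ℕ) :
    ∑ j ∈ Finset.range (2 * n), h j = ∑ j ∈ Finset.range n, (h (2 * j) + h (2 * j + 1)) := by
  induction n with
  | zero => simp
  | succ n ih =>
    rw [show 2 * (n + 1) = 2 * n + 1 + 1 from by ring, Finset.sum_range_succ,
      Finset.sum_range_succ, ih, Finset.sum_range_succ]
    ring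

lemma Dgap_succ_le (b : ℕ) : Dgap b ≤ Dgap (b + 1) := by
  unfold Dgap
  rw [show 2 ^ (b + 1) = 2 * 2 ^ b from by ring, sum_range_two_mul]
  apply Finset.sum_le_sum
  intro j _
  have hp : (0 : ℝ) < (2 : ℝ) ^ b := by positivity
  have ht : (0 : ℝ) ≤ (j : ℝ) := Nat.cast_nonneg j
  have e : ((2 : ℝ)) ^ (b + 1) = 2 * (2 : ℝ) ^ b := by ring
  push_cast
  rw [e]
  set p := (2 : ℝ) ^ b with hpdef
  set t := (j : ℝ) with htdef
  have h3 : p + t + 1 ≠ 0 := by positivity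
  have h4 : (2 * p + 2 * t + 2) ≠ 0 := by positivity
  have h1 : 1 / (2 * p + 2 * t + 2) ≤ 1 / (2 * p + 2 * t + 1) := by
    apply one_div_le_one_div_of_le <;> linarith
  have h2 : 1 / (2 * p + 2 * t + 2) = (1 / 2) * (1 / (p + t + 1)) := by
    field_simp
  have goal : 1 / (p + t + 1) ≤ 1 / (2 * p + 2 * t + 1) + 1 / (2 * p + 2 * t + 2) := by
    linarith
  ring_nf at goal ⊢
  linarith [goal]
  
lemma Dgap_mono : Monotone Dgap := monotone_nat_of_le_succ Dgap_succ_le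

lemma Dgap_nonneg (b : ℕ) : 0 ≤ Dgap b := by
  unfold Dgap
  apply Finset.sum_nonneg
  intro j _
  positivity

lemma telescope (c b : ℕ) (h : c ≤ b) :
    harmonicSum (2 ^ b) = harmonicSum (2 ^ c) + ∑ j ∈ Finset.Ico c b, Dgap j := by
  induction b, h using Nat.le_induction with
  | base => simp
  | succ b hb ih =>
    rw [harm_step, ih, Finset.sum_Ico_succ_top hb]
    ring

lemma tangent (bbar x : ℕ) :
    harmonicSum (2 ^ bbar) + ((x : ℝ) - (bbar : ℝ)) * Dgap bbar ≤ harmonicSum (2 ^ x) := by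
  rcases le_total bbar x with h | h
  · rw [telescope bbar x h]
    have hcard : ((Finset.Ico bbar x).card : ℝ) = (x : ℝ) - bbar := by
      rw [Nat.card_Ico, Nat.cast_sub h]
    have hs : (Finset.Ico bbar x).card • Dgap bbar ≤ ∑ j ∈ Finset.Ico bbar x, Dgap j := by
      apply Finset.card_nsmul_le_sum
      intro j hj
      exact Dgap_mono (Finset.mem_Ico.mp hj).1
    rw [nsmul_eq_mul, hcard] at hs
    linarith
  · rw [telescope x bbar h]
    have hcard : ((Finset.Ico x bbar).card : ℝ) = (bbar : ℝ) - x := by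
      rw [Nat.card_Ico, Nat.cast_sub h]
    have hs : ∑ j ∈ Finset.Ico x bbar, Dgap j ≤ (Finset.Ico x bbar).card • Dgap bbar := by
      apply Finset.sum_le_card_nsmul
      intro j hj
      exact Dgap_mono (le_of_lt (Finset.mem_Ico.mp hj).2)
    rw [nsmul_eq_mul, hcard] at hs
    linarith

lemma superadd (a c : ℕ) :
    harmonicSum (2 ^ a) + harmonicSum (2 ^ c) ≤ harmonicSum (2 ^ (a + c)) + harmonicSum 1 := by
  have t1 := telescope 0 a (Nat.zero_le a)
  have t2 := telescope c (c + a) (Nat.le_add_right c a)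
  rw [Finset.sum_Ico_eq_sum_range] at t2
  simp only [Nat.add_sub_cancel_left] at t2
  have hsum : ∑ j ∈ Finset.Ico 0 a, Dgap j ≤ ∑ j ∈ Finset.range a, Dgap (c + j) := by
    rw [← Finset.range_eq_Ico]
    apply Finset.sum_le_sum
    intro j _
    exact Dgap_mono (Nat.le_add_left j c)
  rw [show a + c = c + a from by ring]
  rw [pow_zero] at t1
  linarith

lemma sum_superadd {K : ℕ} (s : Finset (Fin K)) (b : Fin K → ℕ) :
    ∑ k ∈ s, (harmonicSum (2 ^ b k) - harmonicSum 1) ≤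
      harmonicSum (2 ^ (∑ k ∈ s, b k)) - harmonicSum 1 := by
  classical
  induction s using Finset.induction_on with
  | empty => simp
  | @insert a s ha ih =>
    rw [Finset.sum_insert ha, Finset.sum_insert ha]
    have h := superadd (b a) (∑ k ∈ s, b k)
    linarith

/-- Among all feedback allocations with sum `K·b̄`, the sum `∑ H(2^{b_k})` is
minimized by the equal allocation and maximized by giving everything to one user. -/
theorem stmt15 (K bbar : ℕ) (hK : 1 ≤ K) (hbbar : 0 < bbar)
    (b : Fin K → ℕ) (hsum : ∑ k, b k = K * bbar) :
    (∑ _k : Fin K, harmonicSum (2 ^ bbar)) ≤ ∑ k, harmonicSum (2 ^ b k) ∧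
    (∑ k, harmonicSum (2 ^ b k)) ≤
      ∑ k : Fin K, harmonicSum (2 ^ (if (k : ℕ) = 0 then K * bbar else 0)) := by
  obtain ⟨n, rfl⟩ : ∃ n, K = n + 1 := ⟨K - 1, by omega⟩
  constructor
  · -- lower bound
    have hz : ∑ k : Fin (n + 1), ((b k : ℝ) - (bbar : ℝ)) = 0 := by
      rw [Finset.sum_sub_distrib, Finset.sum_const, Finset.card_univ, Fintype.card_fin]
      have h1 : (∑ k, (b k : ℝ)) = (((n + 1) * bbar : ℕ) : ℝ) := by
        rw [← Nat.cast_sum, hsum]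
      rw [h1]
      push_cast
      ring
    have heq : ∑ k : Fin (n + 1),
        (harmonicSum (2 ^ bbar) + ((b k : ℝ) - (bbar : ℝ)) * Dgap bbar) =
        ∑ _k : Fin (n + 1), harmonicSum (2 ^ bbar) := by
      rw [Finset.sum_add_distrib, ← Finset.sum_mul, hz, zero_mul, add_zero]
    rw [← heq]
    exact Finset.sum_le_sum fun k _ => tangent bbar (b k)
  · -- upper bound
    have hsup := sum_superadd Finset.univ b
    rw [hsum] at hsup
    have hL : ∑ k : Fin (n + 1), (harmonicSum (2 ^ b k) - harmonicSum 1) =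
        (∑ k, harmonicSum (2 ^ b k)) - ((n : ℝ) + 1) * harmonicSum 1 := by
      rw [Finset.sum_sub_distrib, Finset.sum_const, Finset.card_univ, Fintype.card_fin,
        nsmul_eq_mul]
      push_cast
      ring
    rw [hL] at hsup
    have hR : ∑ k : Fin (n + 1), harmonicSum (2 ^ (if (k : ℕ) = 0 then (n + 1) * bbar else 0)) =
        harmonicSum (2 ^ ((n + 1) * bbar)) + (n : ℝ) * harmonicSum 1 := by
      rw [Fin.sum_univ_succ]
      simp [Fin.val_succ]
    rw [hR]
    linarith
end
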